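/- For every real $y \ge 3$ and every positive integer $J$, one has $\sum_{A : P^+(A) \le y,\ \Omega(A) = J} \frac{1}{A} \le C \frac{J}{2^J} (\log y)^2$ for some absolute constant $C > 0$, where the sum is over positive integers $A$ all of whose prime factors are at most $y$ and which have exactly $J$ prime factors counted with multiplicity. -/

import Mathlib

open Finset Real

/-- telescoping -/
lemma tele (g : ℕ → ℝ) {a b : ℕ} (h : a ≤ b) :
    ∑ k ∈ Finset.Ico a b, (g k - g (k + 1)) = g a - g b := by
  induction b, h using Nat.le_induction with
  | base => simp
  | succ b hb ih =>
    rw [Finset.sum_Ico_succ_top hb, ih]; ring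

/-- Chebyshev: sum of log p over primes ≤ n -/
lemma theta_le (n : ℕ) : ∑ p ∈ Nat.primesBelow (n + 1), Real.log p ≤ n * Real.log 4 := by
  have h1 : ∑ p ∈ Nat.primesBelow (n + 1), Real.log p
      = Real.log (∏ p ∈ Nat.primesBelow (n + 1), (p : ℝ)) := by
    rw [Real.log_prod]
    intro p hp
    exact_mod_cast (Nat.prime_of_mem_primesBelow hp).pos.ne'
  have h2 : (∏ p ∈ Nat.primesBelow (n + 1), (p : ℝ)) = (primorial n : ℝ) := by
    rw [primorial]
    push_cast
    rfl
  rw [h1, h2]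
  calc Real.log (primorial n : ℝ) ≤ Real.log ((4 : ℝ) ^ n) := by
        apply Real.log_le_log (by exact_mod_cast primorial_pos n)
        exact_mod_cast primorial_le_4_pow n
    _ = n * Real.log 4 := by rw [Real.log_pow]

lemma legendre_pow_dvd {p n : ℕ} (hp : p.Prime) (hpn : p ≤ n) :
    p ^ (n / p) ∣ n.factorial := by
  rw [Nat.Prime.pow_dvd_factorial_iff hp (Nat.lt_succ_self _)]
  have h1 : 1 ∈ Finset.Ico 1 (Nat.log p n + 1) := by
    simp only [Finset.mem_Ico]
    exact ⟨le_refl 1, by have := Nat.log_pos hp.one_lt hpn; omega⟩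
  have := Finset.single_le_sum (f := fun i => n / p ^ i) (fun i _ => Nat.zero_le _) h1
  simpa using this

lemma sum_div_log_le_log_factorial {n : ℕ} :
    ∑ p ∈ Nat.primesBelow (n + 1), ((n / p : ℕ) : ℝ) * Real.log p
      ≤ Real.log n.factorial := by
  have hfac : n.factorial ≠ 0 := (Nat.factorial_pos n).ne'
  have hsub : Nat.primesBelow (n + 1) ⊆ n.factorial.primeFactors := by
    intro p hp
    have hpp := Nat.prime_of_mem_primesBelow hp
    have hple : p ≤ n := Nat.lt_succ_iff.mp (Nat.lt_of_mem_primesBelow hp)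
    exact Nat.mem_primeFactors.mpr ⟨hpp, Nat.dvd_factorial hpp.pos hple, hfac⟩
  have hlog : Real.log n.factorial = ∑ p ∈ n.factorial.primeFactors,
      (n.factorial.factorization p : ℝ) * Real.log p := by
    conv_lhs => rw [← Nat.factorization_prod_pow_eq_self hfac]
    rw [Nat.prod_factorization_eq_prod_primeFactors]
    push_cast
    rw [Real.log_prod]
    · exact Finset.sum_congr rfl fun p hp => by rw [Real.log_pow]
    · intro p hp
      have := (Nat.prime_of_mem_primeFactors hp).pos
      positivity
  rw [hlog]
  calc ∑ p ∈ Nat.primesBelow (n + 1), ((n / p : ℕ) : ℝ) * Real.log p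
      ≤ ∑ p ∈ Nat.primesBelow (n + 1), (n.factorial.factorization p : ℝ) * Real.log p := by
        refine Finset.sum_le_sum fun p hp => ?_
        have hpp := Nat.prime_of_mem_primesBelow hp
        have hple : p ≤ n := Nat.lt_succ_iff.mp (Nat.lt_of_mem_primesBelow hp)
        have hdvd := legendre_pow_dvd hpp hple
        have hle : n / p ≤ n.factorial.factorization p :=
          (Nat.Prime.pow_dvd_iff_le_factorization hpp hfac).mp hdvd
        exact mul_le_mul_of_nonneg_right (by exact_mod_cast hle) (Real.log_natCast_nonneg p)
    _ ≤ ∑ p ∈ n.factorial.primeFactors, (n.factorial.factorization p : ℝ) * Real.log p := by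
        refine Finset.sum_le_sum_of_subset_of_nonneg hsub fun p hp _ => ?_
        positivity

lemma mertens1 {n : ℕ} (hn : 1 ≤ n) :
    ∑ p ∈ Nat.primesBelow (n + 1), Real.log p / p ≤ Real.log n + Real.log 4 := by
  have hnR : (0 : ℝ) < n := by exact_mod_cast hn
  rw [← mul_le_mul_iff_right₀ hnR]
  have key : ∀ p ∈ Nat.primesBelow (n + 1),
      (n : ℝ) * (Real.log p / p) ≤ ((n / p : ℕ) : ℝ) * Real.log p + Real.log p := by
    intro p hp
    have hpp := Nat.prime_of_mem_primesBelow hp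
    have hp0 : (0 : ℝ) < p := by exact_mod_cast hpp.pos
    have hfloor : (n : ℝ) / p ≤ ((n / p : ℕ) : ℝ) + 1 := by
      rw [div_le_iff₀ hp0]
      have h := (Nat.lt_div_mul_add (a := n) hpp.pos).le
      have hR : (n : ℝ) ≤ (n / p : ℕ) * p + p := by exact_mod_cast h
      nlinarith [hR]
    calc (n : ℝ) * (Real.log p / p) = ((n : ℝ) / p) * Real.log p := by ring
      _ ≤ (((n / p : ℕ) : ℝ) + 1) * Real.log p :=
          mul_le_mul_of_nonneg_right hfloor (Real.log_natCast_nonneg p)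
      _ = ((n / p : ℕ) : ℝ) * Real.log p + Real.log p := by ring
  calc (n : ℝ) * ∑ p ∈ Nat.primesBelow (n + 1), Real.log p / p
      = ∑ p ∈ Nat.primesBelow (n + 1), (n : ℝ) * (Real.log p / p) := Finset.mul_sum _ _ _
    _ ≤ ∑ p ∈ Nat.primesBelow (n + 1), (((n / p : ℕ) : ℝ) * Real.log p + Real.log p) :=
        Finset.sum_le_sum key
    _ = (∑ p ∈ Nat.primesBelow (n + 1), ((n / p : ℕ) : ℝ) * Real.log p)
        + ∑ p ∈ Nat.primesBelow (n + 1), Real.log p := Finset.sum_add_distrib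
    _ ≤ Real.log n.factorial + n * Real.log 4 :=
        add_le_add sum_div_log_le_log_factorial (theta_le n)
    _ ≤ n * Real.log n + n * Real.log 4 := by
        refine add_le_add ?_ le_rfl
        calc Real.log n.factorial ≤ Real.log ((n : ℝ) ^ n) := by
              apply Real.log_le_log (by exact_mod_cast Nat.factorial_pos n)
              exact_mod_cast Nat.factorial_le_pow n
          _ = n * Real.log n := Real.log_pow n n
    _ = (n : ℝ) * (Real.log n + Real.log 4) := by ring

lemma log2_le_one : Real.log 2 ≤ 1 := by
  have h2 : (2 : ℝ) ≤ Real.exp 1 := by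
    have := Real.add_one_le_exp (1 : ℝ); linarith
  calc Real.log 2 ≤ Real.log (Real.exp 1) := Real.log_le_log two_pos h2
    _ = 1 := Real.log_exp 1

lemma log4_le_two : Real.log 4 ≤ 2 := by
  have : (4 : ℝ) = 2 ^ 2 := by norm_num
  rw [this, Real.log_pow]
  have := log2_le_one
  push_cast
  linarith

lemma log4_nonneg : 0 ≤ Real.log 4 := Real.log_nonneg (by norm_num)

lemma one_le_log3 : 1 ≤ Real.log 3 := by
  have h3 : Real.exp 1 ≤ 3 := by
    have := Real.exp_one_lt_d9; linarith
  calc (1 : ℝ) = Real.log (Real.exp 1) := (Real.log_exp 1).symm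
    _ ≤ Real.log 3 := Real.log_le_log (Real.exp_pos 1) h3

lemma one_le_log_nat {m : ℕ} (hm : 3 ≤ m) : 1 ≤ Real.log m := by
  refine one_le_log3.trans (Real.log_le_log (by norm_num) ?_)
  exact_mod_cast hm

/-- Mertens' second theorem (upper bound): sum of 1/p over primes ≤ n. -/
lemma mertens2 {n : ℕ} (hn : 3 ≤ n) :
    ∑ p ∈ Nat.primesBelow (n + 1), 1 / (p : ℝ)
      ≤ Real.log (Real.log n) + 6 := by
  set a : ℕ → ℝ := fun m => if m.Prime then Real.log m / m else 0 with ha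
  set w : ℕ → ℝ := fun m => (Real.log m)⁻¹ with hw
  have ha_nonneg : ∀ m, 0 ≤ a m := by
    intro m; simp only [ha]
    split
    · positivity
    · exact le_refl 0
  have hw_nonneg : ∀ m, 0 ≤ w m := fun m => by
    simp only [hw]; exact inv_nonneg.mpr (Real.log_natCast_nonneg m)
  -- partial sums bound via Mertens 1
  have hA : ∀ k : ℕ, 1 ≤ k → ∑ m ∈ Finset.Ico 3 (k + 1), a m ≤ Real.log k + Real.log 4 := by
    intro k hk
    have h1 : ∑ m ∈ Finset.Ico 3 (k + 1), a m ≤ ∑ m ∈ Finset.range (k + 1), a m := by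
      refine Finset.sum_le_sum_of_subset_of_nonneg ?_ (fun m _ _ => ha_nonneg m) 
      rw [Finset.range_eq_Ico]
      exact Finset.Ico_subset_Ico (Nat.zero_le 3) le_rfl
    have h2 : ∑ m ∈ Finset.range (k + 1), a m
        = ∑ p ∈ Nat.primesBelow (k + 1), Real.log p / p := by
      rw [Nat.primesBelow, Finset.sum_filter]
    exact h1.trans (h2 ▸ mertens1 hk)
  -- monotonicity of w
  have hw_mono : ∀ k : ℕ, 3 ≤ k → 0 ≤ w k - w (k + 1) := by
    intro k hk
    have h1 : (1 : ℝ) ≤ Real.log k := one_le_log_nat hk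
    have h2 : Real.log k ≤ Real.log (k + 1) := by
      apply Real.log_le_log (by positivity)
      push_cast; linarith
    simp only [hw]
    have : (Real.log (k+1))⁻¹ ≤ (Real.log k)⁻¹ := by
      apply inv_anti₀ (by linarith) h2
    push_cast at this ⊢
    linarith
  -- key inequality for telescoping against log log
  have key3 : ∀ k : ℕ, 3 ≤ k → Real.log k * (w k - w (k + 1))
      ≤ Real.log (Real.log ((k + 1 : ℕ) : ℝ)) - Real.log (Real.log k) := by
    intro k hk
    set u := Real.log (k : ℝ) with hu
    set v := Real.log (((k + 1 : ℕ)) : ℝ) with hv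
    have hu1 : 1 ≤ u := one_le_log_nat hk
    have huv : u ≤ v := by
      rw [hu, hv]
      apply Real.log_le_log (by positivity)
      push_cast; linarith
    have hu0 : 0 < u := by linarith
    have hv0 : 0 < v := by linarith
    have hlog : Real.log (u / v) ≤ u / v - 1 := Real.log_le_sub_one_of_pos (by positivity)
    have hdiv : Real.log (u / v) = Real.log u - Real.log v := Real.log_div hu0.ne' hv0.ne'
    have hLHS : u * (w k - w (k + 1)) = 1 - u / v := by
      simp only [hw]
      rw [← hu, ← hv]
      field_simp
    rw [hLHS]
    linarith [hdiv ▸ hlog]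
  -- Step A : extract p = 2
  have hsplit : ∑ p ∈ Nat.primesBelow (n + 1), 1 / (p : ℝ)
      = 1 / 2 + ∑ m ∈ Finset.Ico 3 (n + 1), a m * w m := by
    rw [Nat.primesBelow, Finset.sum_filter, Finset.range_eq_Ico,
      ← Finset.sum_Ico_consecutive _ (Nat.zero_le 3) (by omega : 3 ≤ n + 1)]
    congr 1
    · rw [← Finset.range_eq_Ico]
      simp [Finset.sum_range_succ, Nat.not_prime_zero, Nat.not_prime_one, Nat.prime_two]
    · refine Finset.sum_congr rfl fun m hm => ?_
      obtain ⟨hm3, _⟩ := Finset.mem_Ico.mp hm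
      have hlogm : Real.log m ≠ 0 := by have := one_le_log_nat hm3; linarith
      have hm0 : (m : ℝ) ≠ 0 := Nat.cast_ne_zero.mpr (by omega)
      simp only [ha, hw]
      split
      · field_simp
      · simp
  rw [hsplit]
  -- decompose
  have hdecomp : ∑ m ∈ Finset.Ico 3 (n + 1), a m * w m
      = (∑ m ∈ Finset.Ico 3 (n + 1), a m) * w n
        + ∑ m ∈ Finset.Ico 3 (n + 1), a m * (w m - w n) := by
    rw [Finset.sum_mul, ← Finset.sum_add_distrib]
    exact Finset.sum_congr rfl fun m _ => by ring
  rw [hdecomp]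
  have hln1 : 1 ≤ Real.log n := one_le_log_nat hn
  have hfirst : (∑ m ∈ Finset.Ico 3 (n + 1), a m) * w n ≤ 1 + Real.log 4 := by
    have h1 := hA n (by omega)
    have h2 := mul_le_mul_of_nonneg_right h1 (hw_nonneg n)
    refine h2.trans ?_
    simp only [hw]
    have hinv1 : (Real.log n)⁻¹ ≤ 1 := by
      rw [inv_le_one_iff₀]; right; exact hln1
    have hc : Real.log n * (Real.log n)⁻¹ = 1 := mul_inv_cancel₀ (by linarith)
    have hi0 : 0 ≤ (Real.log n)⁻¹ := inv_nonneg.mpr (by linarith)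
    nlinarith [log4_nonneg]
  have hsecond : ∑ m ∈ Finset.Ico 3 (n + 1), a m * (w m - w n)
      ≤ Real.log (Real.log n) - Real.log (Real.log 3) + Real.log 4 * (w 3 - w n) := by
    have step1 : ∑ m ∈ Finset.Ico 3 (n + 1), a m * (w m - w n)
        = ∑ m ∈ Finset.Ico 3 n, ∑ k ∈ Finset.Ico m n, a m * (w k - w (k + 1)) := by
      rw [Finset.sum_Ico_succ_top (by omega : 3 ≤ n)]
      have : a n * (w n - w n) = 0 := by ring
      rw [this, add_zero]
      refine Finset.sum_congr rfl fun m hm => ?_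
      obtain ⟨_, hmn⟩ := Finset.mem_Ico.mp hm
      rw [← Finset.mul_sum, tele w hmn.le]
    rw [step1, Finset.sum_Ico_Ico_comm]
    have step2 : ∀ k ∈ Finset.Ico 3 n,
        ∑ m ∈ Finset.Ico 3 (k + 1), a m * (w k - w (k + 1))
          ≤ (Real.log (Real.log (k + 1)) - Real.log (Real.log k))
            + Real.log 4 * (w k - w (k + 1)) := by
      intro k hk
      obtain ⟨hk3, _⟩ := Finset.mem_Ico.mp hk
      rw [← Finset.sum_mul]
      have hΔ := hw_mono k hk3
      have hAk := hA k (by omega)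
      calc (∑ m ∈ Finset.Ico 3 (k + 1), a m) * (w k - w (k + 1))
          ≤ (Real.log k + Real.log 4) * (w k - w (k + 1)) :=
            mul_le_mul_of_nonneg_right hAk hΔ
        _ = Real.log k * (w k - w (k + 1)) + Real.log 4 * (w k - w (k + 1)) := by ring
        _ ≤ (Real.log (Real.log (k + 1)) - Real.log (Real.log k))
            + Real.log 4 * (w k - w (k + 1)) := by
              have := key3 k hk3
              push_cast at this ⊢
              linarith
    refine (Finset.sum_le_sum step2).trans ?_
    rw [Finset.sum_add_distrib, ← Finset.mul_sum, tele w (by omega : 3 ≤ n)]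
    have htel : ∑ k ∈ Finset.Ico 3 n,
        (Real.log (Real.log ((k : ℕ) + 1)) - Real.log (Real.log k))
        = Real.log (Real.log n) - Real.log (Real.log 3) := by
      have := tele (fun m => -Real.log (Real.log m)) (by omega : 3 ≤ n)
      simp only [neg_sub_neg] at this
      calc ∑ k ∈ Finset.Ico 3 n, (Real.log (Real.log ((k : ℕ) + 1)) - Real.log (Real.log k))
          = ∑ k ∈ Finset.Ico 3 n, ((fun m => -Real.log (Real.log (m : ℕ))) k
              - (fun m => -Real.log (Real.log (m : ℕ))) (k + 1)) := by
            refine Finset.sum_congr rfl fun k _ => by push_cast; ring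
        _ = Real.log (Real.log n) - Real.log (Real.log 3) := by
            rw [tele (fun m => -Real.log (Real.log (m : ℕ))) (by omega : 3 ≤ n)]
            push_cast
            ring
    rw [htel]
  have hLL3 : 0 ≤ Real.log (Real.log 3) := Real.log_nonneg one_le_log3
  have hw3 : w 3 ≤ 1 := by
    simp only [hw]
    rw [inv_le_one_iff₀]
    right
    have : ((3 : ℕ) : ℝ) = 3 := by norm_num
    rw [this]
    exact one_le_log3
  have hwn0 : 0 ≤ w n := hw_nonneg n
  have hlog43 : Real.log (Real.log 3) = Real.log (Real.log ((3:ℕ):ℝ)) := by norm_num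
  nlinarith [log4_le_two, log4_nonneg, hfirst, hsecond]

/-- The odd part of the Rankin product. -/
lemma odd_zprod_le {n : ℕ} (hn : 3 ≤ n) {z : ℝ} (hz0 : 0 < z) (hz2 : z ≤ 2) :
    ∏ p ∈ (Nat.primesBelow (n + 1)).erase 2, (1 - z / (p : ℝ))⁻¹
      ≤ Real.exp 15 * (Real.log n) ^ 2 := by
  set s := (Nat.primesBelow (n + 1)).erase 2 with hs
  have hp3 : ∀ p ∈ s, 3 ≤ p ∧ p.Prime ∧ p < n + 1 := by
    intro p hp
    obtain ⟨hne, hmem⟩ := Finset.mem_erase.mp hp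
    have hpp := Nat.prime_of_mem_primesBelow hmem
    exact ⟨by rcases hpp.two_le.lt_or_eq with h | h; omega; omega,
      hpp, Nat.lt_of_mem_primesBelow hmem⟩
  have hfacpos : ∀ p ∈ s, 0 < (1 - z / (p : ℝ))⁻¹ := by
    intro p hp
    have h3 := (hp3 p hp).1
    have : (3 : ℝ) ≤ p := by exact_mod_cast h3
    have hzp : z / (p : ℝ) < 1 := by
      rw [div_lt_one (by linarith)]; linarith
    exact inv_pos.mpr (by linarith)
  have hprodpos : 0 < ∏ p ∈ s, (1 - z / (p : ℝ))⁻¹ := Finset.prod_pos hfacpos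
  -- bound the log of the product
  have hlog : Real.log (∏ p ∈ s, (1 - z / (p : ℝ))⁻¹)
      ≤ ∑ p ∈ s, 2 / ((p : ℝ) - 2) := by
    rw [Real.log_prod (fun p hp => (hfacpos p hp).ne')]
    refine Finset.sum_le_sum fun p hp => ?_
    have h3 : (3 : ℝ) ≤ p := by exact_mod_cast (hp3 p hp).1
    have hzp1 : z / (p : ℝ) < 1 := by rw [div_lt_one (by linarith)]; linarith
    have hpos : 0 < 1 - z / (p : ℝ) := by linarith
    have hlogle := Real.log_le_sub_one_of_pos (inv_pos.mpr hpos)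
    refine hlogle.trans ?_
    -- (1 - z/p)⁻¹ - 1 ≤ 2/(p-2)
    have hinv : 1 - z / (p : ℝ) = ((p : ℝ) - z) / (p : ℝ) := by
      field_simp
    rw [hinv, inv_div]
    rw [div_sub' (by linarith : ((p : ℝ) - z) ≠ 0), div_le_div_iff₀ (by linarith) (by linarith)]
    nlinarith
  -- compare with sum over primes and telescoping
  have h2 : ∑ p ∈ s, 2 / ((p : ℝ) - 2)
      ≤ 2 * (∑ p ∈ Nat.primesBelow (n + 1), 1 / (p : ℝ)) + 3 := by
    have hsplit : ∀ p ∈ s, 2 / ((p : ℝ) - 2)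
        = 2 * (1 / (p : ℝ)) + 2 * (1 / ((p : ℝ) - 2) - 1 / (p : ℝ)) := by
      intro p hp; ring
    rw [Finset.sum_congr rfl hsplit, Finset.sum_add_distrib, ← Finset.mul_sum, ← Finset.mul_sum]
    have hA : ∑ p ∈ s, 1 / (p : ℝ) ≤ ∑ p ∈ Nat.primesBelow (n + 1), 1 / (p : ℝ) := by
      refine Finset.sum_le_sum_of_subset_of_nonneg (Finset.erase_subset _ _) ?_
      intro p _ _; positivity
    have hB : ∑ p ∈ s, (1 / ((p : ℝ) - 2) - 1 / (p : ℝ)) ≤ 3 / 2 := by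
      have hsub : s ⊆ Finset.Ico 3 (n + 1) := by
        intro p hp
        obtain ⟨h3, _, hlt⟩ := hp3 p hp
        exact Finset.mem_Ico.mpr ⟨h3, hlt⟩
      have hmono : ∑ p ∈ s, (1 / ((p : ℝ) - 2) - 1 / (p : ℝ))
          ≤ ∑ m ∈ Finset.Ico 3 (n + 1), (1 / ((m : ℝ) - 2) - 1 / (m : ℝ)) := by
        refine Finset.sum_le_sum_of_subset_of_nonneg hsub ?_
        intro m hm _
        have h3 : (3 : ℝ) ≤ m := by exact_mod_cast (Finset.mem_Ico.mp hm).1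
        have : 0 < (m : ℝ) - 2 := by linarith
        have h1 : 1 / (m : ℝ) ≤ 1 / ((m : ℝ) - 2) := by
          apply one_div_le_one_div_of_le this; linarith
        linarith
      refine hmono.trans ?_
      set g : ℕ → ℝ := fun m => 1 / ((m : ℝ) - 2) + 1 / ((m : ℝ) - 1) with hg
      have hcongr : ∀ m ∈ Finset.Ico 3 (n + 1),
          1 / ((m : ℝ) - 2) - 1 / (m : ℝ) = g m - g (m + 1) := by
        intro m hm
        have h3 : (3 : ℝ) ≤ m := by exact_mod_cast (Finset.mem_Ico.mp hm).1
        simp only [hg]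
        push_cast
        ring
      rw [Finset.sum_congr rfl hcongr, tele g (by omega : 3 ≤ n + 1)]
      simp only [hg]
      push_cast
      have hn3 : (3 : ℝ) ≤ (n : ℝ) := by exact_mod_cast hn
      have h1 : 0 < (n : ℝ) + 1 - 2 := by linarith
      have h2 : 0 < (n : ℝ) + 1 - 1 := by linarith
      have h3 : 0 ≤ 1 / ((n : ℝ) + 1 - 2) := by positivity
      have h4 : 0 ≤ 1 / ((n : ℝ) + 1 - 1) := by positivity
      norm_num at h3 h4 ⊢
      have h5 : 0 ≤ ((n : ℝ) + 1 - 2)⁻¹ := inv_nonneg.mpr h1.le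
      have h6 : 0 ≤ ((n : ℝ))⁻¹ := by positivity
      linarith
    linarith
  have hP := mertens2 hn
  have hln1 : 1 ≤ Real.log n := by
    have h3 : Real.exp 1 ≤ 3 := by have := Real.exp_one_lt_d9; linarith
    calc (1 : ℝ) = Real.log (Real.exp 1) := (Real.log_exp 1).symm
      _ ≤ Real.log n := Real.log_le_log (Real.exp_pos 1) (by exact_mod_cast h3.trans (by exact_mod_cast hn : (3:ℝ) ≤ n))
  have hfinal : Real.log (∏ p ∈ s, (1 - z / (p : ℝ))⁻¹)
      ≤ 2 * Real.log (Real.log n) + 15 := by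
    calc Real.log (∏ p ∈ s, (1 - z / (p : ℝ))⁻¹)
        ≤ ∑ p ∈ s, 2 / ((p : ℝ) - 2) := hlog
      _ ≤ 2 * (∑ p ∈ Nat.primesBelow (n + 1), 1 / (p : ℝ)) + 3 := h2
      _ ≤ 2 * (Real.log (Real.log n) + 6) + 3 := by linarith
      _ = 2 * Real.log (Real.log n) + 15 := by ring
  calc ∏ p ∈ s, (1 - z / (p : ℝ))⁻¹
      = Real.exp (Real.log (∏ p ∈ s, (1 - z / (p : ℝ))⁻¹)) := (Real.exp_log hprodpos).symm
    _ ≤ Real.exp (2 * Real.log (Real.log n) + 15) := Real.exp_le_exp.mpr hfinal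
    _ = Real.exp 15 * (Real.log n) ^ 2 := by
        rw [Real.exp_add, mul_comm]
        congr 1
        rw [show (2 : ℝ) * Real.log (Real.log n) = (2 : ℕ) * Real.log (Real.log n) by norm_num,
          Real.exp_nat_mul, Real.exp_log (by linarith : (0:ℝ) < Real.log n)]

/-- Rankin-type bound: there is an absolute constant `C > 0` such that for all
`y ≥ 3` and positive integers `J`, the sum of `1/A` over `y`-smooth positive
integers `A` with exactly `J` prime factors (with multiplicity) is at most
`C · (J/2^J) · (log y)²`. -/
theorem smooth_reciprocal_sum_bound :
    ∃ C > (0 : ℝ), ∀ y : ℝ, 3 ≤ y → ∀ J : ℕ, 0 < J →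
      ∑' A : ℕ, (if 0 < A ∧ (∀ p ∈ A.primeFactors, (p : ℝ) ≤ y) ∧
            A.primeFactorsList.length = J then (1 : ℝ) / A else 0)
        ≤ C * (J / 2 ^ J) * (Real.log y) ^ 2 := by
  refine ⟨4 * Real.exp 15, by positivity, ?_⟩
  intro y hy J hJ
  set n := ⌊y⌋₊ with hn
  have hy0 : (0 : ℝ) ≤ y := by linarith
  have hn3 : 3 ≤ n := Nat.le_floor (by exact_mod_cast hy)
  have hJ1 : (1 : ℝ) ≤ (J : ℝ) := by exact_mod_cast hJ
  have hJ0 : (0 : ℝ) < J := by linarith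
  set z : ℝ := 2 - 1 / (J : ℝ) with hz
  have hinvJ : 0 < 1 / (J : ℝ) := by positivity
  have hinvJ1 : 1 / (J : ℝ) ≤ 1 := by rw [div_le_one hJ0]; exact hJ1
  have hz1 : 1 ≤ z := by rw [hz]; linarith
  have hz0 : 0 < z := by linarith
  have hz2 : z ≤ 2 := by rw [hz]; linarith
  have hzlt2 : z < 2 := by rw [hz]; linarith
  set N := n + 1 with hN
  set f : ℕ → ℝ := fun A => z ^ A.primeFactorsList.length / A with hf
  have hf1 : f 1 = 1 := by simp [hf]
  have hfnonneg : ∀ A, 0 ≤ f A := fun A => by simp only [hf]; positivity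
  have hmul : ∀ {m k : ℕ}, Nat.Coprime m k → f (m * k) = f m * f k := by
    intro m k hco
    rcases eq_or_ne m 0 with rfl | hm
    · have hk1 : k = 1 := (Nat.coprime_zero_left k).mp hco
      subst hk1; simp [hf]
    rcases eq_or_ne k 0 with rfl | hk
    · have hm1 : m = 1 := (Nat.coprime_zero_right m).mp hco
      subst hm1; simp [hf]
    · simp only [hf]
      rw [(Nat.perm_primeFactorsList_mul hm hk).length_eq, List.length_append, pow_add,
        Nat.cast_mul, div_mul_div_comm]
  have hzp_lt : ∀ {p : ℕ}, p.Prime → z / (p : ℝ) < 1 ∧ 0 ≤ z / (p : ℝ) := by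
    intro p hp
    have h2 : (2 : ℝ) ≤ p := by exact_mod_cast hp.two_le
    refine ⟨?_, by positivity⟩
    rw [div_lt_one (by linarith)]; linarith
  have hgeo : ∀ {p : ℕ}, p.Prime → ∀ k : ℕ, f (p ^ k) = (z / p) ^ k := by
    intro p hp k
    simp only [hf]
    rw [Nat.Prime.primeFactorsList_pow hp, List.length_replicate, div_pow, Nat.cast_pow]
  have hsum_p : ∀ {p : ℕ}, p.Prime → Summable (fun k : ℕ => ‖f (p ^ k)‖) := by
    intro p hp
    obtain ⟨hlt, hge⟩ := hzp_lt hp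
    have heq : (fun k : ℕ => ‖f (p ^ k)‖) = fun k : ℕ => (z / p) ^ k := by
      funext k
      rw [hgeo hp k, Real.norm_of_nonneg (by positivity)]
    rw [heq]
    exact summable_geometric_of_lt_one hge hlt
  obtain ⟨hsumnorm, hhs⟩ :=
    EulerProduct.summable_and_hasSum_smoothNumbers_prod_primesBelow_tsum
      (f := f) hf1 hmul hsum_p N
  have hprodeq : ∏ p ∈ N.primesBelow, ∑' k : ℕ, f (p ^ k)
      = ∏ p ∈ N.primesBelow, (1 - z / (p : ℝ))⁻¹ := by
    refine Finset.prod_congr rfl fun p hp => ?_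
    have hpp := Nat.prime_of_mem_primesBelow hp
    obtain ⟨hlt, hge⟩ := hzp_lt hpp
    rw [tsum_congr (hgeo hpp)]
    exact tsum_geometric_of_lt_one hge hlt
  rw [hprodeq] at hhs
  set Pi := ∏ p ∈ N.primesBelow, (1 - z / (p : ℝ))⁻¹ with hPi
  have hsum_ind : Summable (Set.indicator (Nat.smoothNumbers N) f) :=
    summable_subtype_iff_indicator.mp hhs.summable
  have htsum_ind : ∑' A : ℕ, Set.indicator (Nat.smoothNumbers N) f A = Pi := by
    rw [← _root_.tsum_subtype]; exact hhs.tsum_eq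
  set G : ℕ → ℝ := fun A => if 0 < A ∧ (∀ p ∈ A.primeFactors, (p : ℝ) ≤ y) ∧
      A.primeFactorsList.length = J then (1 : ℝ) / A else 0 with hG
  have hGnonneg : ∀ A, 0 ≤ G A := by
    intro A; simp only [hG]; split
    · positivity
    · exact le_refl 0
  have hkey : ∀ A, z ^ J * G A ≤ Set.indicator (Nat.smoothNumbers N) f A := by
    intro A
    simp only [hG]
    split_ifs with hc
    · obtain ⟨hApos, hsm, hlen⟩ := hc
      have hAsm : A ∈ Nat.smoothNumbers N := by
        rw [Nat.mem_smoothNumbers]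
        refine ⟨hApos.ne', fun p hp => ?_⟩
        have hp' : p ∈ A.primeFactors :=
          Nat.mem_primeFactors_iff_mem_primeFactorsList.mpr hp
        have hpy := hsm p hp'
        have hpn : p ≤ n := Nat.le_floor hpy
        omega
      rw [Set.indicator_of_mem hAsm]
      simp only [hf, hlen]
      rw [mul_one_div]
    · rw [mul_zero]
      exact Set.indicator_nonneg (fun B _ => hfnonneg B) A
  have hzJpos : (0 : ℝ) < z ^ J := by positivity
  have hGz_summable : Summable (fun A => z ^ J * G A) :=
    Summable.of_nonneg_of_le (fun A => mul_nonneg hzJpos.le (hGnonneg A)) hkey hsum_ind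
  have hGsummable : Summable G := by
    have h := hGz_summable.mul_left (z ^ J)⁻¹
    refine h.congr fun A => ?_
    field_simp
  have hmain : z ^ J * ∑' A, G A ≤ Pi := by
    rw [← tsum_mul_left]
    exact htsum_ind ▸ Summable.tsum_le_tsum hkey hGz_summable hsum_ind
  -- bound Pi
  have h2mem : 2 ∈ N.primesBelow := Nat.mem_primesBelow.mpr ⟨by omega, Nat.prime_two⟩
  have hprod_split : Pi = (1 - z / ((2 : ℕ) : ℝ))⁻¹
      * ∏ p ∈ N.primesBelow.erase 2, (1 - z / (p : ℝ))⁻¹ :=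
    (Finset.mul_prod_erase _ _ h2mem).symm
  have h2fac : (1 - z / ((2 : ℕ) : ℝ))⁻¹ = 2 * J := by
    have hJne : (J : ℝ) ≠ 0 := by linarith
    have : 1 - z / ((2 : ℕ) : ℝ) = 1 / (2 * J) := by
      rw [hz]; push_cast; field_simp; ring
    rw [this, one_div, inv_inv]
  have hodd := odd_zprod_le hn3 hz0 hz2
  have hlogn_nonneg : 0 ≤ Real.log n := Real.log_natCast_nonneg n
  have hPibound : Pi ≤ 2 * J * (Real.exp 15 * (Real.log n) ^ 2) := by
    rw [hprod_split, h2fac]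
    exact mul_le_mul_of_nonneg_left hodd (by positivity)
  -- z^J ≥ 2^J / 2
  have hzJ : (2 : ℝ) ^ J ≤ 2 * z ^ J := by
    have hJne : (J : ℝ) ≠ 0 := by linarith
    have hmb : (-2 : ℝ) ≤ -(1 / (2 * (J : ℝ))) := by
      have h2J : (0 : ℝ) < 2 * (J : ℝ) := by linarith
      have : 1 / (2 * (J : ℝ)) ≤ 1 := by rw [div_le_one h2J]; linarith
      linarith
    have hb := one_add_mul_le_pow hmb J
    have h1 : (1 : ℝ) + (J : ℝ) * (-(1 / (2 * (J : ℝ)))) = 1 / 2 := by field_simp; ring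
    have h2 : (1 : ℝ) + (-(1 / (2 * (J : ℝ)))) = z / 2 := by rw [hz]; field_simp; ring
    rw [h1, h2, div_pow] at hb
    have h2Jpos : (0 : ℝ) < 2 ^ J := by positivity
    rw [le_div_iff₀ h2Jpos] at hb
    linarith
  -- conclude
  have hsumG : ∑' A, G A ≤ Pi / z ^ J := by
    rw [le_div_iff₀ hzJpos]
    linarith [hmain]
  have hPnonneg : 0 ≤ Pi := le_trans (mul_nonneg hzJpos.le (tsum_nonneg hGnonneg)) hmain
  have hlogy : Real.log n ≤ Real.log y := by
    apply Real.log_le_log (by exact_mod_cast (by omega : 0 < n))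
    exact (Nat.floor_le hy0)
  have hlog2 : (Real.log n) ^ 2 ≤ (Real.log y) ^ 2 := by nlinarith
  have h2Jpos : (0 : ℝ) < 2 ^ J := by positivity
  have hinv2 : (1 : ℝ) / z ^ J ≤ 2 / 2 ^ J := by
    rw [div_le_div_iff₀ hzJpos h2Jpos]; linarith
  calc ∑' A, G A ≤ Pi / z ^ J := hsumG
    _ = Pi * (1 / z ^ J) := by ring
    _ ≤ Pi * (2 / 2 ^ J) := mul_le_mul_of_nonneg_left hinv2 hPnonneg
    _ ≤ (2 * J * (Real.exp 15 * (Real.log n) ^ 2)) * (2 / 2 ^ J) :=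
        mul_le_mul_of_nonneg_right hPibound (by positivity)
    _ = (4 * Real.exp 15) * ((J : ℝ) / 2 ^ J) * (Real.log n) ^ 2 := by ring
    _ ≤ (4 * Real.exp 15) * ((J : ℝ) / 2 ^ J) * (Real.log y) ^ 2 :=
        mul_le_mul_of_nonneg_left hlog2 (by positivity)
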